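/- Let ε > 0 and let ξ_ε = (w_1,…,w_N) ∈ Ξ with X_1 = {i : w_i = 0}, X_3 = {i : w_i = 1/n}, X_2 = {i : 0 < w_i < 1/n}. Assume that either (b) X_2 = ∅ and max_{i ∈ X_3} F_Φ(ξ_ε; i) ≤ min_{i ∈ X_1} F_Φ(ξ_ε; i) + ε, or (c) X_2 ≠ ∅ and there is a real number s such that s − ε/2 < F_Φ(ξ_ε; i) < s + ε/2 for every i ∈ X_2, max_{i ∈ X_3} F_Φ(ξ_ε; i) ≤ s + ε/2, and s − ε/2 ≤ min_{i ∈ X_1} F_Φ(ξ_ε; i). Then ξ_ε is an ε-approximation of a Φ-optimal design, i.e., Φ(ξ_ε) ≤ Φ(ξ) + ε for every ξ ∈ Ξ. -/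
import Mathlib


theorem stmt_15
    (N : ℕ) (hN : 1 ≤ N)
    (Δ : Set (Fin N → ℝ))
    (hΔ : Δ = {w : Fin N → ℝ | (∀ i, 0 ≤ w i) ∧ ∑ i, w i = 1})
    (Φ : (Fin N → ℝ) → ℝ)
    (hconv : ConvexOn ℝ Δ Φ)
    (F : (Fin N → ℝ) → (Fin N → ℝ) → ℝ)
    (hF : ∀ ξ ∈ Δ, ∀ η ∈ Δ,
      Filter.Tendsto (fun α : ℝ => (Φ ((1 - α) • ξ + α • η) - Φ ξ) / α)
        (nhdsWithin 0 (Set.Ioi 0)) (nhds (F ξ η)))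
    (hlin : ∀ ξ ∈ Δ, ∀ η ∈ Δ, F ξ η = ∑ i, η i * F ξ (Pi.single i 1))
    (n : ℕ) (hn1 : 1 ≤ n) (hnN : n ≤ N)
    (Ξ : Set (Fin N → ℝ))
    (hΞ : Ξ = {w : Fin N → ℝ | w ∈ Δ ∧ ∀ i, w i ≤ 1 / (n : ℝ)})
    (ε : ℝ) (hε : 0 < ε)
    (ξε : Fin N → ℝ) (hmem : ξε ∈ Ξ)
    (X1 X2 X3 : Set (Fin N))
    (hX1 : X1 = {i | ξε i = 0})
    (hX2 : X2 = {i | 0 < ξε i ∧ ξε i < 1 / (n : ℝ)})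
    (hX3 : X3 = {i | ξε i = 1 / (n : ℝ)})
    (hcond :
      (X2 = ∅ ∧ ∀ u ∈ X3, ∀ l ∈ X1,
        F ξε (Pi.single u 1) ≤ F ξε (Pi.single l 1) + ε) ∨
      (X2.Nonempty ∧ ∃ s : ℝ,
        (∀ i ∈ X2, s - ε / 2 < F ξε (Pi.single i 1) ∧
          F ξε (Pi.single i 1) < s + ε / 2) ∧
        (∀ u ∈ X3, F ξε (Pi.single u 1) ≤ s + ε / 2) ∧
        (∀ l ∈ X1, s - ε / 2 ≤ F ξε (Pi.single l 1)))) :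
    ∀ ξ ∈ Ξ, Φ ξε ≤ Φ ξ + ε := by
  subst hΔ hΞ hX1 hX2 hX3
  obtain ⟨⟨hξε0, hξεsum⟩, hξεle⟩ := hmem
  intro ξ hξmem
  obtain ⟨⟨hξ0, hξsum⟩, hξle⟩ := hξmem
  set f : Fin N → ℝ := fun i => F ξε (Pi.single i 1) with hfdef
  have hξεΔ : ξε ∈ {w : Fin N → ℝ | (∀ i, 0 ≤ w i) ∧ ∑ i, w i = 1} := ⟨hξε0, hξεsum⟩
  have hξΔ : ξ ∈ {w : Fin N → ℝ | (∀ i, 0 ≤ w i) ∧ ∑ i, w i = 1} := ⟨hξ0, hξsum⟩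
  -- F ξε ξε = 0
  have hself : F ξε ξε = 0 := by
    have h := hF ξε hξεΔ ξε hξεΔ
    have heq : (fun α : ℝ => (Φ ((1 - α) • ξε + α • ξε) - Φ ξε) / α)
        = fun _ : ℝ => (0 : ℝ) := by
      funext α
      rw [← add_smul]
      simp
    rw [heq] at h
    exact (tendsto_nhds_unique h tendsto_const_nhds)
  have hsum0 : ∑ i, ξε i * f i = 0 := by
    rw [← hlin ξε hξεΔ ξε hξεΔ, hself]
  -- F ξε ξ ≤ Φ ξ - Φ ξε
  have hgrad : F ξε ξ ≤ Φ ξ - Φ ξε := by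
    refine le_of_tendsto (hF ξε hξεΔ ξ hξΔ) ?_
    have hm : Set.Ioo (0:ℝ) 1 ∈ nhdsWithin 0 (Set.Ioi 0) := by
      rw [mem_nhdsWithin]
      exact ⟨Set.Iio 1, isOpen_Iio, by norm_num,
        fun x hx => ⟨hx.2, hx.1⟩⟩
    filter_upwards [hm] with α hα
    have h1 : Φ ((1 - α) • ξε + α • ξ) ≤ (1 - α) * Φ ξε + α * Φ ξ :=
      hconv.2 hξεΔ hξΔ (by linarith [hα.2]) (le_of_lt hα.1) (by ring)
    rw [div_le_iff₀ hα.1]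
    nlinarith [h1]
  have hlinξ : F ξε ξ = ∑ i, ξ i * f i := hlin ξε hξεΔ ξ hξΔ
  -- obtain the uniform separating value s
  obtain ⟨s, h1, h3, h2⟩ : ∃ s : ℝ,
      (∀ i, ξε i = 0 → s - ε / 2 ≤ f i) ∧
      (∀ i, ξε i = 1 / (n : ℝ) → f i ≤ s + ε / 2) ∧
      (∀ i, 0 < ξε i → ξε i < 1 / (n : ℝ) → |f i - s| ≤ ε / 2) := by
    rcases hcond with ⟨hX2e, hb⟩ | ⟨_, s, hs2, hs3, hs1⟩
    · have hX2e' : ∀ i : Fin N, ¬(0 < ξε i ∧ ξε i < 1 / (n : ℝ)) := by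
        intro i hi
        have : i ∈ {i | 0 < ξε i ∧ ξε i < 1 / (n : ℝ)} := hi
        rw [hX2e] at this
        exact this
      -- the set X3 is nonempty
      have hS3ne : ∃ u : Fin N, ξε u = 1 / (n : ℝ) := by
        by_contra h
        push_neg at h
        have hzero : ∀ i, ξε i = 0 := by
          intro i
          by_contra h0
          have hpos : 0 < ξε i := lt_of_le_of_ne (hξε0 i) (Ne.symm h0)
          have hlt : ξε i < 1 / (n : ℝ) := lt_of_le_of_ne (hξεle i) (h i)
          exact hX2e' i ⟨hpos, hlt⟩
        have : (∑ i, ξε i) = 0 := Finset.sum_eq_zero fun i _ => hzero i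
        rw [hξεsum] at this
        norm_num at this
      set S3 : Finset (Fin N) := Finset.univ.filter (fun i => ξε i = 1 / (n : ℝ)) with hS3def
      have hS3ne' : S3.Nonempty := by
        obtain ⟨u, hu⟩ := hS3ne
        exact ⟨u, by simp [hS3def, hu]⟩
      obtain ⟨u₀, hu₀mem, hu₀max⟩ := S3.exists_max_image f hS3ne'
      have hu₀ : ξε u₀ = 1 / (n : ℝ) := by
        simpa [hS3def] using hu₀mem
      refine ⟨f u₀ - ε / 2, ?_, ?_, ?_⟩
      · intro i hi
        have := hb u₀ hu₀ i hi
        linarith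
      · intro i hi
        have := hu₀max i (by simp [hS3def, hi])
        linarith
      · intro i hp hl
        exact absurd ⟨hp, hl⟩ (hX2e' i)
    · refine ⟨s, fun i hi => hs1 i hi, fun i hi => hs3 i hi, fun i hp hl => ?_⟩
      have := hs2 i ⟨hp, hl⟩
      rw [abs_le]
      constructor <;> linarith [this.1, this.2]
  -- termwise lower bound
  have key : ∀ i : Fin N,
      (ξ i - ξε i) * s - ε / 2 * |ξ i - ξε i| ≤ (ξ i - ξε i) * f i := by
    intro i
    rcases eq_or_lt_of_le (hξε0 i) with h0 | hpos
    · have hd : 0 ≤ ξ i - ξε i := by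
        have := hξ0 i; linarith [h0.symm ▸ (le_refl (0:ℝ))]
      have hfi := h1 i h0.symm
      rw [abs_of_nonneg hd]
      nlinarith
    rcases eq_or_lt_of_le (hξεle i) with h1' | hlt
    · have hd : ξ i - ξε i ≤ 0 := by
        have := hξle i; linarith [h1' ▸ (le_refl (ξε i))]
      have hfi := h3 i h1'
      rw [abs_of_nonpos hd]
      nlinarith
    · have hfi := h2 i hpos hlt
      have habs : -( |ξ i - ξε i| * |f i - s| ) ≤ (ξ i - ξε i) * (f i - s) := by
        rw [← abs_mul]
        exact neg_abs_le _
      have hb2 : |ξ i - ξε i| * |f i - s| ≤ |ξ i - ξε i| * (ε / 2) :=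
        mul_le_mul_of_nonneg_left hfi (abs_nonneg _)
      nlinarith
  -- sum up
  have hsumlb : -ε ≤ ∑ i, (ξ i - ξε i) * f i := by
    have hs1 : ∑ i, ((ξ i - ξε i) * s - ε / 2 * |ξ i - ξε i|)
        ≤ ∑ i, (ξ i - ξε i) * f i :=
      Finset.sum_le_sum fun i _ => key i
    have hs2 : ∑ i, (ξ i - ξε i) * s = 0 := by
      rw [← Finset.sum_mul, Finset.sum_sub_distrib, hξsum, hξεsum]
      ring
    have hs3 : ∑ i, |ξ i - ξε i| ≤ 2 := by
      have : ∀ i : Fin N, |ξ i - ξε i| ≤ ξ i + ξε i := by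
        intro i
        have := abs_sub (ξ i) (ξε i)
        calc |ξ i - ξε i| ≤ |ξ i| + |ξε i| := abs_sub _ _
          _ = ξ i + ξε i := by
            rw [abs_of_nonneg (hξ0 i), abs_of_nonneg (hξε0 i)]
      calc ∑ i, |ξ i - ξε i| ≤ ∑ i, (ξ i + ξε i) :=
            Finset.sum_le_sum fun i _ => this i
        _ = 2 := by rw [Finset.sum_add_distrib, hξsum, hξεsum]; norm_num
    have : ∑ i, ((ξ i - ξε i) * s - ε / 2 * |ξ i - ξε i|)
        = -(ε / 2) * ∑ i, |ξ i - ξε i| := by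
      rw [Finset.sum_sub_distrib, hs2, ← Finset.mul_sum]
      ring
    rw [this] at hs1
    nlinarith
  have hdiff : ∑ i, (ξ i - ξε i) * f i = F ξε ξ := by
    have : ∑ i, (ξ i - ξε i) * f i = ∑ i, ξ i * f i - ∑ i, ξε i * f i := by
      rw [← Finset.sum_sub_distrib]
      congr 1; funext i; ring
    rw [this, hsum0, hlinξ]
    ring
  rw [hdiff] at hsumlb
  linarith
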